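/- arXiv:0808.3741 — 2 statements merged into one kernel-verified Lean document; each statement's English description precedes it below -/
import Mathlib

section
/- Let N ≥ 1 and let (τ^j, ℓ^j), j = 1,…,N, and complex coordinates s^κ, κ = 1,…,N, be two smooth coordinate systems on a real 2N-dimensional manifold, with G a Hermitian metric in the s-coordinates. Suppose for all j, κ: ∂ℓ^j/∂s̄^κ = -i ⟨∂/∂τ^j, μ_κ⟩ and ∂ℓ^j/∂s^κ = i ⟨μ_κ, ∂/∂τ^j⟩ (where ⟨·,·⟩ denotes the sesquilinear extension of G to the complexified tangent space and μ_κ corresponds to ∂/∂s^κ), and suppose the coefficient of dℓ^k ∧ dℓ^m in ω^{WP} = i G_{κλ̄} ds^κ ∧ ds̄^λ vanishes. Then ω^{WP} = -Σ_j dτ^j ∧ dℓ^j. -/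
open Complex Finset

/-- Linear-algebraic core of `ω^{FN} = ω^{WP}` (Theorem 1.3).  `V` is the complexified
tangent space with Hermitian product `⟨u,v⟩ = ⟪v,u⟫` (linear in the first paper-slot);
`T j, L j` are the twist and length coordinate vectors `∂/∂τ^j, ∂/∂ℓ^j` with dual basis
`dτ^j, dℓ^j`; `λ j` is the `(1,0)`-part of `dℓ^j`.  The hypotheses `hpair` and `hre`
encode equations (16)–(17) (`∂ℓ^j/∂s^κ = i⟨μ_κ, ∂/∂τ^j⟩`), and `hLL` the vanishing of the
`dℓ^k ∧ dℓ^m`-coefficients of `ω^{WP}`.  Conclusion: `ω^{WP} = -Σ_j dτ^j ∧ dℓ^j`. -/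
theorem fenchelNielsen_eq_weilPetersson_core
    (N : ℕ) (hN : 1 ≤ N)
    (V : Type*) [NormedAddCommGroup V] [InnerProductSpace ℂ V]
    (hdim : Module.finrank ℂ V = N)
    (T L : Fin N → V) (dτ dℓ : Fin N → V →ₗ[ℝ] ℝ)
    (hdualTT : ∀ j k, dτ j (T k) = if j = k then (1:ℝ) else 0)
    (hdualTL : ∀ j k, dτ j (L k) = 0)
    (hdualLT : ∀ j k, dℓ j (T k) = 0)
    (hdualLL : ∀ j k, dℓ j (L k) = if j = k then (1:ℝ) else 0)
    (hspan : ∀ v : V, v = (∑ j, dτ j v • T j) + ∑ j, dℓ j v • L j)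
    (lam : Fin N → V →ₗ[ℂ] ℂ)
    (hre : ∀ j (v : V), dℓ j v = 2 * (lam j v).re)
    (hpair : ∀ j (v : V), lam j v = Complex.I * (inner ℂ (T j) v : ℂ))
    (hLL : ∀ j k, -2 * (inner ℂ (L k) (L j) : ℂ).im = 0) :
    ∀ u v : V,
      -2 * (inner ℂ v u : ℂ).im = -∑ j, (dτ j u * dℓ j v - dτ j v * dℓ j u) := by
  -- `Im ⟪T j, v⟫ = -(dℓ j v)/2`
  have him : ∀ j (v : V), (inner ℂ (T j) v : ℂ).im = -(dℓ j v) / 2 := by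
    intro j v
    have h := hre j v
    rw [hpair] at h
    simp [Complex.mul_re] at h
    linarith
  have hLL' : ∀ j k, (inner ℂ (L k) (L j) : ℂ).im = 0 := by
    intro j k
    have := hLL j k
    linarith
  -- `Im ⟪L j, u⟫ = dτ j u / 2`
  have hLim : ∀ j (u : V), (inner ℂ (L j) u : ℂ).im = dτ j u / 2 := by
    intro j u
    conv_lhs => rw [hspan u]
    rw [inner_add_right]
    rw [show (inner ℂ (L j) (∑ k, dτ k u • T k) : ℂ) = ∑ k, dτ k u • (inner ℂ (L j) (T k) : ℂ) by
      rw [inner_sum]; exact Finset.sum_congr rfl fun k _ => inner_smul_real_right _ _ _]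
    rw [show (inner ℂ (L j) (∑ k, dℓ k u • L k) : ℂ) = ∑ k, dℓ k u • (inner ℂ (L j) (L k) : ℂ) by
      rw [inner_sum]; exact Finset.sum_congr rfl fun k _ => inner_smul_real_right _ _ _]
    have hLT : ∀ k, (inner ℂ (L j) (T k) : ℂ).im = (if k = j then (1:ℝ) else 0) / 2 := by
      intro k
      have h1 : (inner ℂ (L j) (T k) : ℂ) = (starRingEnd ℂ) (inner ℂ (T k) (L j)) :=
        (inner_conj_symm _ _).symm
      rw [h1, Complex.conj_im, him k (L j), hdualLL k j]
      ring
    simp only [Complex.add_im, Complex.im_sum, Complex.real_smul, Complex.mul_im,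
      Complex.ofReal_re, Complex.ofReal_im, zero_mul, add_zero]
    rw [Finset.sum_congr rfl fun k _ => by rw [hLT k],
        Finset.sum_congr rfl (fun k _ => by rw [hLL' k j, mul_zero] : ∀ k ∈ Finset.univ,
          dℓ k u * (inner ℂ (L j) (L k) : ℂ).im = 0)]
    simp [Finset.mul_sum, mul_ite, Finset.sum_ite_eq']
    rw [Finset.sum_eq_single j (fun k _ hk => by simp [hk]) (by simp)]
    rw [if_pos rfl]
    ring
  intro u v
  conv_lhs => rw [hspan v]
  rw [show (inner ℂ ((∑ j, dτ j v • T j) + ∑ j, dℓ j v • L j) u : ℂ)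
      = (∑ j, dτ j v • (inner ℂ (T j) u : ℂ)) + ∑ j, dℓ j v • (inner ℂ (L j) u : ℂ) by
    rw [inner_add_left, sum_inner, sum_inner]
    congr 1 <;> exact Finset.sum_congr rfl fun k _ => inner_smul_real_left _ _ _]
  simp only [Complex.add_im, Complex.im_sum, Complex.real_smul, Complex.mul_im,
    Complex.ofReal_re, Complex.ofReal_im, zero_mul, add_zero]
  rw [Finset.sum_congr rfl fun j _ => by rw [him j u],
      Finset.sum_congr rfl (fun j _ => by rw [hLim j u] : ∀ j ∈ Finset.univ,
        dℓ j v * (inner ℂ (L j) u : ℂ).im = dℓ j v * (dτ j u / 2))]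
  rw [mul_add, Finset.mul_sum, Finset.mul_sum, ← Finset.sum_add_distrib, ← Finset.sum_neg_distrib]
  exact Finset.sum_congr rfl fun j _ => by ring
end

section
/- Under the hypotheses of the previous setting (equation ∂ℓ^j/∂s^κ = i⟨μ_κ, ∂/∂τ^j⟩ for all κ), the real part of i ⟨∂/∂s^α, ∂/∂s^β⟩ (∂s^α/∂τ^j)(∂s̄^β/∂τ^k) vanishes; equivalently, the restriction of the Weil-Petersson symplectic form to the span of the twist vectors ∂/∂τ^j is zero (the twist vectors span a Lagrangian-type isotropic subspace for ω^{WP}). -/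
open Complex

/-- Abstract form of the Claim in the proof of Theorem 1.3: the twist vectors `T j = ∂/∂τ^j`
span an isotropic subspace for the Weil–Petersson symplectic form `ω(u,v) = -2 Im⟨u,v⟩`.
Here `⟨u,v⟩ = ⟪v,u⟫` is the Hermitian product (linear in the first paper-slot), `lam j` is
the `(1,0)`-part of the length differential `dℓ^j` (so `dℓ^j = 2 Re (lam j)`), `hpair`
encodes equation (17), and `hzero` says lengths are constant along twists (`∂ℓ^j/∂τ^k = 0`). -/
theorem twist_vectors_isotropic
    (N : ℕ) (V : Type*) [NormedAddCommGroup V] [InnerProductSpace ℂ V]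
    (T : Fin N → V) (lam : Fin N → V →ₗ[ℂ] ℂ)
    (hpair : ∀ j (v : V), lam j v = Complex.I * (inner ℂ (T j) v : ℂ))
    (hzero : ∀ j k, 2 * (lam j (T k)).re = 0) :
    ∀ j k, -2 * (inner ℂ (T k) (T j) : ℂ).im = 0 := by
  intro j k
  have h := hzero k j
  rw [hpair] at h
  simp [Complex.mul_re, Complex.I_re, Complex.I_im] at h
  linarith
end
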